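/- Let μ and ν be Borel probability measures on ℝ, z ∈ ℂ∖ℝ, α ∈ ℂ, ψ₁ ∈ L²(ℝ,μ) with ∫ψ₁ dμ = 0, and ψ₂ ∈ L²(ℝ,ν) with ∫ψ₂ dν = 0. Define β = [α·G_μ(z)·G_ν(z) + G_ν(z)·∫ ψ₁(x)/(z−x) dμ(x) + G_μ(z)·∫ ψ₂(y)/(z−y) dν(y)] / (G_μ(z)+G_ν(z)−z·G_μ(z)·G_ν(z)), c_x = [∫ ψ₁(x)/(z−x) dμ(x) + β·(z·G_μ(z)−1)] / G_μ(z), c_y = [∫ ψ₂(y)/(z−y) dν(y) + β·(z·G_ν(z)−1)] / G_ν(z), φ₁(x) = (ψ₁(x)+β·x−c_x)/(z−x), and φ₂(y) = (ψ₂(y)+β·y−c_y)/(z−y). Then φ₁ ∈ L²(ℝ,μ), φ₂ ∈ L²(ℝ,ν), ∫φ₁ dμ = 0 = ∫φ₂ dν, the functions x ↦ x·(φ₁(x)+β) and y ↦ y·(φ₂(y)+β) are μ- respectively ν-integrable with ∫ x·(φ₁(x)+β) dμ(x) = c_x and ∫ y·(φ₂(y)+β) dν(y) = c_y, and moreover z·β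 − c_x − c_y = α, z·φ₁(x) − x·(φ₁(x)+β) + c_x = ψ₁(x) for μ-a.e. x, and z·φ₂(y) − y·(φ₂(y)+β) + c_y = ψ₂(y) for ν-a.e. y. (That is, (β,φ₁,φ₂) is the image of (α,ψ₁,ψ₂) under the explicit bounded inverse of z − N_x − N_y in the boolean model.) -/

import Mathlib

open MeasureTheory Complex

noncomputable def cauchyTransform (ρ : Measure ℝ) (z : ℂ) : ℂ := ∫ t, (z - (t : ℂ))⁻¹ ∂ρ

namespace BMAux

variable {z : ℂ}

lemma sub_ne (hz : z.im ≠ 0) (t : ℝ) : z - (t : ℂ) ≠ 0 := by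
  intro h
  apply hz
  have := congrArg Complex.im h
  simpa using this

lemma meas_k : Measurable fun t : ℝ => (z - (t : ℂ))⁻¹ :=
  (measurable_const.sub Complex.measurable_ofReal).inv

lemma norm_k_le (hz : z.im ≠ 0) (t : ℝ) : ‖(z - (t : ℂ))⁻¹‖ ≤ |z.im|⁻¹ := by
  rw [norm_inv]
  have h1 : |z.im| ≤ ‖z - (t : ℂ)‖ := by
    have := Complex.abs_im_le_norm (z - (t : ℂ))
    simpa using this
  have h0 : (0:ℝ) < |z.im| := abs_pos.mpr hz
  exact inv_anti₀ h0 h1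

lemma memLp_k (ρ : Measure ℝ) [IsFiniteMeasure ρ] (hz : z.im ≠ 0) (p : ENNReal) :
    MemLp (fun t : ℝ => (z - (t : ℂ))⁻¹) p ρ :=
  MemLp.of_bound meas_k.aestronglyMeasurable _ (Filter.Eventually.of_forall (norm_k_le hz))

lemma integrable_k (ρ : Measure ℝ) [IsFiniteMeasure ρ] (hz : z.im ≠ 0) :
    Integrable (fun t : ℝ => (z - (t : ℂ))⁻¹) ρ :=
  memLp_one_iff_integrable.mp (memLp_k ρ hz 1)

lemma normSq_lower (hz : z.im ≠ 0) (t : ℝ) : z.im ^ 2 ≤ Complex.normSq (z - (t : ℂ)) := by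
  have : Complex.normSq (z - (t : ℂ)) = (z.re - t) ^ 2 + z.im ^ 2 := by
    simp [Complex.normSq_apply]; ring
  nlinarith [sq_nonneg (z.re - t)]

lemma integrable_S (ρ : Measure ℝ) [IsFiniteMeasure ρ] (hz : z.im ≠ 0) :
    Integrable (fun t : ℝ => (Complex.normSq (z - (t : ℂ)))⁻¹) ρ := by
  have him : (0:ℝ) < z.im ^ 2 := by positivity
  refine (integrable_const ((z.im ^ 2)⁻¹)).mono' ?_ ?_
  · exact ((Complex.continuous_normSq.measurable.comp
      (measurable_const.sub Complex.measurable_ofReal)).inv).aestronglyMeasurable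
  · refine Filter.Eventually.of_forall fun t => ?_
    have h1 := normSq_lower hz t
    have h2 : (0:ℝ) < Complex.normSq (z - (t : ℂ)) := lt_of_lt_of_le him h1
    rw [Real.norm_eq_abs, abs_of_pos (by positivity)]
    exact inv_anti₀ him h1

lemma im_G (ρ : Measure ℝ) [IsFiniteMeasure ρ] (hz : z.im ≠ 0) :
    (cauchyTransform ρ z).im = -z.im * ∫ t, (Complex.normSq (z - (t : ℂ)))⁻¹ ∂ρ := by
  have hcomm := Complex.imCLM.integral_comp_comm (integrable_k ρ hz)
  rw [cauchyTransform]
  have : (∫ t : ℝ, (z - (t : ℂ))⁻¹ ∂ρ).im = ∫ t : ℝ, ((z - (t : ℂ))⁻¹).im ∂ρ := by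
    simpa using hcomm.symm
  rw [this, ← integral_const_mul]
  congr 1
  ext t
  rw [Complex.inv_im]
  have : (z - (t : ℂ)).im = z.im := by simp
  rw [this]
  field_simp

lemma S_pos (ρ : Measure ℝ) [IsProbabilityMeasure ρ] (hz : z.im ≠ 0) :
    0 < ∫ t, (Complex.normSq (z - (t : ℂ)))⁻¹ ∂ρ := by
  have him : (0:ℝ) < z.im ^ 2 := by positivity
  have hpos : ∀ t : ℝ, 0 < (Complex.normSq (z - (t : ℂ)))⁻¹ := fun t =>
    inv_pos.mpr (lt_of_lt_of_le him (normSq_lower hz t))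
  rw [integral_pos_iff_support_of_nonneg (fun t => (hpos t).le) (integrable_S ρ hz)]
  have : Function.support (fun t : ℝ => (Complex.normSq (z - (t : ℂ)))⁻¹) = Set.univ := by
    ext t; simpa using (hpos t).ne'
  rw [this]
  simp

lemma G_ne (ρ : Measure ℝ) [IsProbabilityMeasure ρ] (hz : z.im ≠ 0) :
    cauchyTransform ρ z ≠ 0 := by
  intro h
  have h1 := im_G ρ hz
  rw [h] at h1
  simp only [Complex.zero_im] at h1
  have := S_pos ρ hz
  have : -z.im * ∫ t, (Complex.normSq (z - (t : ℂ)))⁻¹ ∂ρ ≠ 0 := by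
    apply mul_ne_zero (by simpa using hz) this.ne'
  exact this h1.symm

lemma normSq_G_le (ρ : Measure ℝ) [IsProbabilityMeasure ρ] (hz : z.im ≠ 0) :
    Complex.normSq (cauchyTransform ρ z) ≤ ∫ t, (Complex.normSq (z - (t : ℂ)))⁻¹ ∂ρ := by
  set X : ℝ → ℝ := fun t => ‖(z - (t : ℂ))⁻¹‖ with hX
  have hX2 : MemLp X 2 ρ := (memLp_k ρ hz 2).norm
  have hvar := ProbabilityTheory.variance_nonneg X ρ
  rw [ProbabilityTheory.variance_eq_sub hX2] at hvar
  have hsq : (∫ t, X t ∂ρ) ^ 2 ≤ ∫ t, (X t) ^ 2 ∂ρ := by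
    have : ∫ t, (X ^ 2) t ∂ρ = ∫ t, (X t) ^ 2 ∂ρ := by simp [Pi.pow_apply]
    linarith [hvar, this ▸ hvar]
  have hXsq : ∀ t : ℝ, (X t) ^ 2 = (Complex.normSq (z - (t : ℂ)))⁻¹ := by
    intro t
    rw [hX]
    simp only [Complex.sq_norm, Complex.normSq_inv]
  have h1 : ‖cauchyTransform ρ z‖ ≤ ∫ t, X t ∂ρ :=
    norm_integral_le_integral_norm _
  have h2 : Complex.normSq (cauchyTransform ρ z) = ‖cauchyTransform ρ z‖ ^ 2 := by
    rw [Complex.sq_norm]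
  rw [h2]
  calc ‖cauchyTransform ρ z‖ ^ 2 ≤ (∫ t, X t ∂ρ) ^ 2 := by
        have h0 : 0 ≤ ‖cauchyTransform ρ z‖ := norm_nonneg _
        nlinarith
    _ ≤ ∫ t, (X t) ^ 2 ∂ρ := hsq
    _ = ∫ t, (Complex.normSq (z - (t : ℂ)))⁻¹ ∂ρ := by
        congr 1; ext t; exact hXsq t

lemma im_inv_G (ρ : Measure ℝ) [IsProbabilityMeasure ρ] (hz : z.im ≠ 0) :
    z.im ^ 2 ≤ z.im * ((cauchyTransform ρ z)⁻¹).im := by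
  set G := cauchyTransform ρ z with hG
  have hGne := G_ne ρ hz
  have hnsq : 0 < Complex.normSq G := Complex.normSq_pos.mpr hGne
  rw [Complex.inv_im, im_G ρ hz]
  have hS := normSq_G_le ρ hz
  have hSpos := S_pos ρ hz
  rw [div_eq_mul_inv]
  have : z.im * (-(-z.im * ∫ t, (Complex.normSq (z - (t : ℂ)))⁻¹ ∂ρ) * (Complex.normSq G)⁻¹)
      = z.im ^ 2 * ((∫ t, (Complex.normSq (z - (t : ℂ)))⁻¹ ∂ρ) / Complex.normSq G) := by
    field_simp
  rw [this]
  have h1 : (1:ℝ) ≤ (∫ t, (Complex.normSq (z - (t : ℂ)))⁻¹ ∂ρ) / Complex.normSq G :=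
    (one_le_div hnsq).mpr hS
  nlinarith [sq_nonneg z.im]

lemma D_ne (μ ν : Measure ℝ) [IsProbabilityMeasure μ] [IsProbabilityMeasure ν] (hz : z.im ≠ 0) :
    cauchyTransform μ z + cauchyTransform ν z
      - z * cauchyTransform μ z * cauchyTransform ν z ≠ 0 := by
  intro h
  have hGm := G_ne μ hz
  have hGn := G_ne ν hz
  have hkey : (cauchyTransform μ z)⁻¹ + (cauchyTransform ν z)⁻¹ = z := by
    field_simp
    linear_combination (cauchyTransform μ z) * (cauchyTransform ν z) * 0 + h
  have him := congrArg Complex.im hkey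
  simp only [Complex.add_im] at him
  have h1 := im_inv_G μ hz
  have h2 := im_inv_G ν hz
  have : z.im * (((cauchyTransform μ z)⁻¹).im + ((cauchyTransform ν z)⁻¹).im) = z.im ^ 2 := by
    rw [him]; ring
  nlinarith [(by positivity : (0:ℝ) < z.im ^ 2)]

end BMAux

namespace BMAux

lemma side (ρ : Measure ℝ) [IsProbabilityMeasure ρ] (hz : z.im ≠ 0)
    (ψ : ℝ → ℂ) (hψ : MemLp ψ 2 ρ) (hψ0 : (∫ t, ψ t ∂ρ) = 0) (β c : ℂ) (φ : ℝ → ℂ)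
    (hc : c = ((∫ t, ψ t / (z - (t : ℂ)) ∂ρ) + β * (z * cauchyTransform ρ z - 1)) /
        cauchyTransform ρ z)
    (hφ : φ = fun t : ℝ => (ψ t + β * (t : ℂ) - c) / (z - (t : ℂ))) :
    MemLp φ 2 ρ ∧ (∫ t, φ t ∂ρ) = 0 ∧
    Integrable (fun t : ℝ => (t : ℂ) * (φ t + β)) ρ ∧
    (∫ t, (t : ℂ) * (φ t + β) ∂ρ) = c ∧
    ∀ t : ℝ, z * φ t - (t : ℂ) * (φ t + β) + c = ψ t := by
  have hGne := G_ne ρ hz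
  have hzx := sub_ne hz
  -- pointwise reformulation
  have h₁ : ∀ t : ℝ, φ t = (ψ t + (β * z - c)) * (z - (t : ℂ))⁻¹ - β := by
    intro t
    rw [hφ]
    field_simp [hzx t]
    ring
  -- MemLp
  have hmem0 : MemLp (fun t : ℝ => (ψ t + (β * z - c)) * (z - (t : ℂ))⁻¹) 2 ρ := by
    have h := (memLp_k ρ hz ⊤).smul (r := 2) (hψ.add (memLp_const (β * z - c)))
    have heq : (fun t : ℝ => (ψ t + (β * z - c)) * (z - (t : ℂ))⁻¹)
        = (ψ + fun _ : ℝ => β * z - c) • fun t : ℝ => (z - (t : ℂ))⁻¹ := by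
      funext t
      simp only [Pi.smul_apply, Pi.add_apply, smul_eq_mul, Pi.mul_apply]
    rw [heq]
    exact h
  have hmemφ : MemLp φ 2 ρ := by
    have : φ = fun t : ℝ => (ψ t + (β * z - c)) * (z - (t : ℂ))⁻¹ - β := funext h₁
    rw [this]
    exact hmem0.sub (memLp_const β)
  have hφint : Integrable φ ρ := hmemφ.integrable one_le_two
  have hψint : Integrable ψ ρ := hψ.integrable one_le_two
  -- integrable pieces
  have hψk : Integrable (fun t : ℝ => ψ t * (z - (t : ℂ))⁻¹) ρ := by
    have h := ((memLp_k ρ hz ⊤).smul (r := 2) hψ).integrable one_le_two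
    have heq : (fun t : ℝ => ψ t * (z - (t : ℂ))⁻¹)
        = ψ • fun t : ℝ => (z - (t : ℂ))⁻¹ := by
      funext t
      simp only [Pi.smul_apply, smul_eq_mul, Pi.mul_apply]
    rw [heq]
    exact h
  have hk : Integrable (fun t : ℝ => (z - (t : ℂ))⁻¹) ρ := integrable_k ρ hz
  -- integral of φ
  have hIdiv : (∫ t, ψ t / (z - (t : ℂ)) ∂ρ) = ∫ t, ψ t * (z - (t : ℂ))⁻¹ ∂ρ := by
    simp only [div_eq_mul_inv]
  have hintφ : (∫ t, φ t ∂ρ)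
      = (∫ t, ψ t * (z - (t : ℂ))⁻¹ ∂ρ) + (β * z - c) * cauchyTransform ρ z - β := by
    have e : (∫ t, φ t ∂ρ)
        = ∫ t, ((ψ t * (z - (t : ℂ))⁻¹ + (β * z - c) * (z - (t : ℂ))⁻¹) - β) ∂ρ := by
      apply integral_congr_ae
      refine Filter.Eventually.of_forall fun t => ?_
      rw [h₁ t]; ring
    have hint1 : Integrable
        (fun t : ℝ => ψ t * (z - (t : ℂ))⁻¹ + (β * z - c) * (z - (t : ℂ))⁻¹) ρ :=
      hψk.add (hk.const_mul _)
    rw [e, integral_sub hint1 (integrable_const β),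
      integral_add hψk (hk.const_mul _), integral_const_mul]
    simp [cauchyTransform, measure_univ]
  have hint0 : (∫ t, φ t ∂ρ) = 0 := by
    rw [hintφ, ← hIdiv]
    rw [hc]
    field_simp
    ring
  -- pointwise identity
  have hpt : ∀ t : ℝ, z * φ t - (t : ℂ) * (φ t + β) + c = ψ t := by
    intro t
    rw [hφ]
    field_simp [hzx t]
    ring
  have hkey : ∀ t : ℝ, (t : ℂ) * (φ t + β) = z * φ t + c - ψ t := by
    intro t
    linear_combination -(hpt t)
  have hintM : Integrable (fun t : ℝ => (t : ℂ) * (φ t + β)) ρ := by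
    have : (fun t : ℝ => (t : ℂ) * (φ t + β)) = fun t : ℝ => (z * φ t + c) - ψ t :=
      funext fun t => by rw [hkey t]
    rw [this]
    exact ((hφint.const_mul z).add (integrable_const c)).sub hψint
  have hintMval : (∫ t, (t : ℂ) * (φ t + β) ∂ρ) = c := by
    have : (fun t : ℝ => (t : ℂ) * (φ t + β)) = fun t : ℝ => (z * φ t + c) - ψ t :=
      funext fun t => by rw [hkey t]
    have hint2 : Integrable (fun t : ℝ => z * φ t + c) ρ :=
      (hφint.const_mul z).add (integrable_const c)
    rw [this, integral_sub hint2 hψint,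
      integral_add (hφint.const_mul z) (integrable_const c), integral_const_mul, hint0, hψ0]
    simp [measure_univ]
  exact ⟨hmemφ, hint0, hintM, hintMval, hpt⟩

end BMAux

/-- The triple `(β, φ₁, φ₂)` defined by the displayed formulas is the image of `(α, ψ₁, ψ₂)`
under the explicit bounded inverse of `z − N_x − N_y` in the boolean model. -/
theorem boolean_model_additive_resolvent
    (μ ν : Measure ℝ) [IsProbabilityMeasure μ] [IsProbabilityMeasure ν]
    (z : ℂ) (hz : z.im ≠ 0) (α : ℂ) (ψ₁ ψ₂ : ℝ → ℂ)
    (hψ₁ : MemLp ψ₁ 2 μ) (hψ₁0 : (∫ x, ψ₁ x ∂μ) = 0)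
    (hψ₂ : MemLp ψ₂ 2 ν) (hψ₂0 : (∫ y, ψ₂ y ∂ν) = 0)
    (β cx cy : ℂ) (φ₁ φ₂ : ℝ → ℂ)
    (hβ : β = (α * cauchyTransform μ z * cauchyTransform ν z
          + cauchyTransform ν z * (∫ x, ψ₁ x / (z - (x : ℂ)) ∂μ)
          + cauchyTransform μ z * (∫ y, ψ₂ y / (z - (y : ℂ)) ∂ν)) /
        (cauchyTransform μ z + cauchyTransform ν z
          - z * cauchyTransform μ z * cauchyTransform ν z))
    (hcx : cx = ((∫ x, ψ₁ x / (z - (x : ℂ)) ∂μ) + β * (z * cauchyTransform μ z - 1)) /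
        cauchyTransform μ z)
    (hcy : cy = ((∫ y, ψ₂ y / (z - (y : ℂ)) ∂ν) + β * (z * cauchyTransform ν z - 1)) /
        cauchyTransform ν z)
    (hφ₁ : φ₁ = fun x : ℝ => (ψ₁ x + β * (x : ℂ) - cx) / (z - (x : ℂ)))
    (hφ₂ : φ₂ = fun y : ℝ => (ψ₂ y + β * (y : ℂ) - cy) / (z - (y : ℂ))) :
    MemLp φ₁ 2 μ ∧ MemLp φ₂ 2 ν ∧
    (∫ x, φ₁ x ∂μ) = 0 ∧ (∫ y, φ₂ y ∂ν) = 0 ∧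
    Integrable (fun x : ℝ => (x : ℂ) * (φ₁ x + β)) μ ∧
    Integrable (fun y : ℝ => (y : ℂ) * (φ₂ y + β)) ν ∧
    (∫ x, (x : ℂ) * (φ₁ x + β) ∂μ) = cx ∧
    (∫ y, (y : ℂ) * (φ₂ y + β) ∂ν) = cy ∧
    z * β - cx - cy = α ∧
    (∀ᵐ x ∂μ, z * φ₁ x - (x : ℂ) * (φ₁ x + β) + cx = ψ₁ x) ∧
    (∀ᵐ y ∂ν, z * φ₂ y - (y : ℂ) * (φ₂ y + β) + cy = ψ₂ y) := by
  obtain ⟨m1, i1, int1, val1, pt1⟩ := BMAux.side μ hz ψ₁ hψ₁ hψ₁0 β cx φ₁ hcx hφ₁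
  obtain ⟨m2, i2, int2, val2, pt2⟩ := BMAux.side ν hz ψ₂ hψ₂ hψ₂0 β cy φ₂ hcy hφ₂
  refine ⟨m1, m2, i1, i2, int1, int2, val1, val2, ?_,
    Filter.Eventually.of_forall pt1, Filter.Eventually.of_forall pt2⟩
  have hGm := BMAux.G_ne μ hz
  have hGn := BMAux.G_ne ν hz
  have hD := BMAux.D_ne μ ν hz
  rw [hcx, hcy, hβ]
  field_simp
  ring
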